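/- Let S be a collection of distinct subsets of a universe U, each of size at most r, and define the transformed collection S^T over universe U^T = (U × {1,...,t}) ∪ S consisting of all sets of the form {(u_1,j_1),...,(u_{r'},j_{r'}), S} where S = {u_1,...,u_{r'}} ∈ S and 1 ≤ j_i ≤ t. Then S has a collection of k sets such that every element of U lies in at most t of them if and only if S^T contains k pairwise disjoint sets. -/

import Mathlib

theorem stmt5 {α : Type*} [DecidableEq α] (r t k : ℕ) (ht : 1 ≤ t)
    (𝒮 : Finset (Finset α)) (hr : ∀ S ∈ 𝒮, S.card ≤ r)
    (ST : Finset (Finset (α × Fin t ⊕ Finset α)))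
    (hST : ∀ T, T ∈ ST ↔ ∃ S ∈ 𝒮, ∃ j : α → Fin t,
      T = S.image (fun u => Sum.inl (u, j u)) ∪ {Sum.inr S}) :
    (∃ K ⊆ 𝒮, K.card = k ∧
        ∀ u : α, (K.filter (fun S => u ∈ S)).card ≤ t) ↔
      (∃ KT ⊆ ST, KT.card = k ∧
        ∀ T ∈ KT, ∀ T' ∈ KT, T ≠ T' → Disjoint T T') := by
  classical
  have t0 : Fin t := ⟨0, ht⟩
  set TS : Finset α → (α → Fin t) → Finset (α × Fin t ⊕ Finset α) :=
    fun S j => S.image (fun u => Sum.inl (u, j u)) ∪ {Sum.inr S} with hTSdef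
  have memInr : ∀ (S : Finset α) (j : α → Fin t) (A : Finset α),
      Sum.inr A ∈ TS S j ↔ A = S := by
    intro S j A; simp [hTSdef]
  have memInl : ∀ (S : Finset α) (j : α → Fin t) (u : α) (i : Fin t),
      Sum.inl (u, i) ∈ TS S j ↔ u ∈ S ∧ j u = i := by
    intro S j u i
    simp only [hTSdef, Finset.mem_union, Finset.mem_image, Finset.mem_singleton]
    constructor
    · rintro (⟨a, ha, hai⟩ | h)
      · obtain ⟨rfl, rfl⟩ : a = u ∧ j a = i := by
          simpa using hai
        exact ⟨ha, rfl⟩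
      · exact absurd h (by simp)
    · rintro ⟨hu, rfl⟩; exact Or.inl ⟨u, hu, rfl⟩
  constructor
  · rintro ⟨K, hK𝒮, hKcard, hKt⟩
    -- pick for each u an injection on the filter
    have he : ∀ u : α, ∃ g : Finset α → Fin t,
        Set.InjOn g (K.filter (fun S => u ∈ S)) := by
      intro u
      obtain ⟨e⟩ : Nonempty ((K.filter (fun S => u ∈ S)) ↪ Fin t) := by
        rw [Function.Embedding.nonempty_iff_card_le]
        simpa using hKt u
      refine ⟨fun S => if h : S ∈ K.filter (fun S => u ∈ S) then e ⟨S, h⟩ else t0, ?_⟩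
      intro S hS S' hS' hgg
      simp only [Finset.mem_coe] at hS hS'
      simp only [dif_pos hS, dif_pos hS'] at hgg
      exact Subtype.ext_iff.mp (e.injective hgg)
    choose g hg using he
    refine ⟨K.image (fun S => TS S (fun u => g u S)), ?_, ?_, ?_⟩
    · intro T hT
      simp only [Finset.mem_image] at hT
      obtain ⟨S, hS, rfl⟩ := hT
      exact (hST _).2 ⟨S, hK𝒮 hS, fun u => g u S, rfl⟩
    · rw [Finset.card_image_of_injOn, hKcard]
      intro S hS S' hS' hEq
      simp only at hEq
      have : Sum.inr S ∈ TS S' (fun u => g u S') := by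
        rw [← hEq]; exact (memInr _ _ _).2 rfl
      exact (memInr _ _ _).1 this
    · intro T hT T' hT' hne
      simp only [Finset.mem_image] at hT hT'
      obtain ⟨S, hS, rfl⟩ := hT
      obtain ⟨S', hS', rfl⟩ := hT'
      have hSS' : S ≠ S' := fun h => hne (by rw [h])
      rw [Finset.disjoint_left]
      rintro (⟨u, i⟩ | A) hx hx'
      · obtain ⟨huS, hi⟩ := (memInl _ _ _ _).1 hx
        obtain ⟨huS', hi'⟩ := (memInl _ _ _ _).1 hx'
        refine hSS' (hg u ?_ ?_ (hi.trans hi'.symm))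
        · simp [huS, hS]
        · simp [huS', hS']
      · exact hSS' (((memInr _ _ _).1 hx).symm.trans ((memInr _ _ _).1 hx'))
  · rintro ⟨KT, hKTST, hKTcard, hdisj⟩
    set P : Finset (α × Fin t ⊕ Finset α) → Prop :=
      fun T => ∃ S ∈ 𝒮, ∃ j : α → Fin t, T = TS S j with hPdef
    set f : Finset (α × Fin t ⊕ Finset α) → Finset α :=
      fun T => if h : P T then h.choose else ∅ with hfdef
    set jf : Finset (α × Fin t ⊕ Finset α) → α → Fin t :=
      fun T => if h : P T then h.choose_spec.2.choose else fun _ => t0 with hjfdef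
    have hspec : ∀ T ∈ KT, f T ∈ 𝒮 ∧ T = TS (f T) (jf T) := by
      intro T hT
      have hP : P T := (hST T).1 (hKTST hT)
      refine ⟨?_, ?_⟩
      · rw [hfdef]; simp only [dif_pos hP]; exact hP.choose_spec.1
      · rw [hfdef, hjfdef]; simp only [dif_pos hP]
        exact hP.choose_spec.2.choose_spec
    have hinrf : ∀ T ∈ KT, Sum.inr (f T) ∈ T := by
      intro T hT
      have h1 : Sum.inr (f T) ∈ TS (f T) (jf T) := (memInr _ _ _).2 rfl
      rwa [← (hspec T hT).2] at h1
    have hfinj : Set.InjOn f KT := by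
      intro T hT T' hT' hff
      by_contra hne
      have := Finset.disjoint_left.1 (hdisj T hT T' hT' hne) (hinrf T hT)
      rw [hff] at this
      exact this (hinrf T' hT')
    refine ⟨KT.image f, ?_, ?_, ?_⟩
    · intro S hS
      simp only [Finset.mem_image] at hS
      obtain ⟨T, hT, rfl⟩ := hS
      exact (hspec T hT).1
    · rw [Finset.card_image_of_injOn hfinj, hKTcard]
    · intro u
      have hsub : (KT.image f).filter (fun S => u ∈ S)
          = (KT.filter (fun T => u ∈ f T)).image f := by
        ext S
        simp only [Finset.mem_filter, Finset.mem_image]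
        constructor
        · rintro ⟨⟨T, hT, rfl⟩, hu⟩; exact ⟨T, ⟨hT, hu⟩, rfl⟩
        · rintro ⟨T, ⟨hT, hu⟩, rfl⟩; exact ⟨⟨T, hT, rfl⟩, hu⟩
      rw [hsub]
      calc ((KT.filter (fun T => u ∈ f T)).image f).card
          ≤ (KT.filter (fun T => u ∈ f T)).card := Finset.card_image_le
        _ ≤ (Finset.univ : Finset (Fin t)).card := by
            apply Finset.card_le_card_of_injOn (fun T => jf T u)
            · intro T _; simp
            · intro T hT T' hT' hjj
              simp only [Finset.mem_coe, Finset.mem_filter] at hT hT'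
              by_contra hne
              have hxT : Sum.inl (u, jf T u) ∈ T := by
                have h1 : Sum.inl (u, jf T u) ∈ TS (f T) (jf T) :=
                  (memInl _ _ _ _).2 ⟨hT.2, rfl⟩
                rwa [← (hspec T hT.1).2] at h1
              have hxT' : Sum.inl (u, jf T u) ∈ T' := by
                have h1 : Sum.inl (u, jf T u) ∈ TS (f T') (jf T') :=
                  (memInl _ _ _ _).2 ⟨hT'.2, hjj.symm⟩
                rwa [← (hspec T' hT'.1).2] at h1
              exact Finset.disjoint_left.1 (hdisj T hT.1 T' hT'.1 hne) hxT hxT'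
        _ = t := by simp
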